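/- Let φ be the discrete randomization on X = {0, 1/K, …, 1}^d with parameters α, β = (1−α)/K. For r ∈ {0, 1, …, d}, let x_C = (0,…,0) and x̄_C have its first r coordinates equal to 1 and the rest 0. Then for any x, x̄ ∈ X with ‖x − x̄‖₀ = r and any u, v ∈ {0,…,d}, the cardinality of {z ∈ X : ‖z − x‖₀ = u, ‖z − x̄‖₀ = v} equals the cardinality of {z ∈ X : ‖z − x_C‖₀ = u, ‖z − x̄_C‖₀ = v}, and consequently Pr(φ(x) ∈ L(u,v)) and Pr(φ(x̄) ∈ L(u,v)) depend only on r (not on the particular pair x, x̄). -/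
import Mathlib


/-- Probability mass of the discrete randomization `φ` of Eq. (6). -/
noncomputable def discreteProb {d K : ℕ} (α β : ℝ)
    (x z : Fin d → Fin (K + 1)) : ℝ :=
  ∏ i, (if z i = x i then α else β)

/-- Hamming distance on `{0,…,K}^d`. -/
def ham {d K : ℕ} (x z : Fin d → Fin (K + 1)) : ℕ :=
  (Finset.univ.filter fun i => z i ≠ x i).card

open Finset

private lemma card_filter_perm {d : ℕ} (π : Equiv.Perm (Fin d)) (P : Fin d → Prop)
    [DecidablePred P] :
    (Finset.univ.filter fun i => P (π i)).card = (Finset.univ.filter P).card := by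
  apply Finset.card_bij (fun i _ => π i)
  · intro a ha; simp only [mem_filter, mem_univ, true_and] at ha ⊢; exact ha
  · intro a _ b _ h; exact π.injective h
  · intro b hb
    refine ⟨π.symm b, ?_, by simp⟩
    simp only [mem_filter, mem_univ, true_and, Equiv.apply_symm_apply] at hb ⊢
    exact hb

private lemma discreteProb_eq {d K : ℕ} (α β : ℝ) (x z : Fin d → Fin (K + 1)) :
    discreteProb α β x z = α ^ (d - ham x z) * β ^ (ham x z) := by
  classical
  unfold discreteProb ham
  rw [← Finset.prod_filter_mul_prod_filter_not Finset.univ (fun i => z i = x i)]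
  rw [Finset.prod_congr rfl (fun i hi => if_pos (Finset.mem_filter.mp hi).2),
      Finset.prod_congr rfl (fun i hi => if_neg (Finset.mem_filter.mp hi).2),
      Finset.prod_const, Finset.prod_const]
  have h := Finset.card_filter_add_card_filter_not
    (s := (Finset.univ : Finset (Fin d))) (p := fun i => z i = x i)
  simp only [Finset.card_univ, Fintype.card_fin] at h
  have : (Finset.univ.filter fun i => z i = x i).card
      = d - (Finset.univ.filter fun i => ¬ z i = x i).card := by omega
  rw [this]

private lemma sum_discreteProb {d K : ℕ} (α β : ℝ) (c : Fin d → Fin (K + 1))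
    (s : Finset (Fin d → Fin (K + 1))) (w : ℕ) (h : ∀ z ∈ s, ham c z = w) :
    ∑ z ∈ s, discreteProb α β c z = s.card * (α ^ (d - w) * β ^ w) := by
  rw [Finset.sum_congr rfl (fun z hz => by rw [discreteProb_eq, h z hz])]
  rw [Finset.sum_const, nsmul_eq_mul]

theorem stmt_9 (d K : ℕ) (hK : 1 ≤ K) (α : ℝ) (hα : α ∈ Set.Ioo (0 : ℝ) 1)
    (r : ℕ) (hr : r ≤ d) (x xb : Fin d → Fin (K + 1)) (hxxb : ham x xb = r)
    (u v : ℕ) :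
    (Finset.univ.filter fun z : Fin d → Fin (K + 1) =>
        ham x z = u ∧ ham xb z = v).card
      = (Finset.univ.filter fun z : Fin d → Fin (K + 1) =>
          ham (fun _ => 0) z = u
            ∧ ham (fun i => if (i : ℕ) < r then 1 else 0) z = v).card
    ∧ (∑ z ∈ Finset.univ.filter fun z : Fin d → Fin (K + 1) =>
          ham x z = u ∧ ham xb z = v, discreteProb α ((1 - α) / K) x z)
      = (∑ z ∈ Finset.univ.filter fun z : Fin d → Fin (K + 1) =>
          ham (fun _ => 0) z = u
            ∧ ham (fun i => if (i : ℕ) < r then 1 else 0) z = v,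
          discreteProb α ((1 - α) / K) (fun _ => 0) z)
    ∧ (∑ z ∈ Finset.univ.filter fun z : Fin d → Fin (K + 1) =>
          ham x z = u ∧ ham xb z = v, discreteProb α ((1 - α) / K) xb z)
      = (∑ z ∈ Finset.univ.filter fun z : Fin d → Fin (K + 1) =>
          ham (fun _ => 0) z = u
            ∧ ham (fun i => if (i : ℕ) < r then 1 else 0) z = v,
          discreteProb α ((1 - α) / K)
            (fun i => if (i : ℕ) < r then 1 else 0) z) := by
  classical
  -- notation
  set xbC : Fin d → Fin (K + 1) := fun i => if (i : ℕ) < r then 1 else 0 with hxbC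
  have hone : (1 : Fin (K + 1)) ≠ 0 := by
    have : (1 : ℕ) < K + 1 := by omega
    simp [Fin.ext_iff, Nat.mod_eq_of_lt this]
  -- cardinalities of the two index sets
  have card_p : (Finset.univ.filter fun i : Fin d => (i : ℕ) < r).card = r := by
    refine Eq.trans ?_ (Finset.card_range r)
    refine Finset.card_bij (fun a _ => (a : ℕ)) ?_ ?_ ?_
    · intro a ha
      simp only [mem_filter, mem_univ, true_and] at ha
      simpa using ha
    · intro a _ b _ h; exact Fin.val_injective h
    · intro b hb
      simp only [Finset.mem_range] at hb
      exact ⟨⟨b, lt_of_lt_of_le hb hr⟩, by simpa using hb, rfl⟩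
  have card_q : (Finset.univ.filter fun i : Fin d => xb i ≠ x i).card = r := hxxb
  -- permutation of coordinates
  have hcards : Fintype.card {i : Fin d // (i : ℕ) < r}
      = Fintype.card {i : Fin d // xb i ≠ x i} := by
    rw [Fintype.card_subtype, Fintype.card_subtype, card_p, card_q]
  set e := Fintype.equivOfCardEq hcards with he
  set π := e.extendSubtype with hπ
  have hπ_mem : ∀ i : Fin d, (i : ℕ) < r → xb (π i) ≠ x (π i) :=
    fun i hi => e.extendSubtype_mem i hi
  have hπ_notMem : ∀ i : Fin d, ¬ (i : ℕ) < r → xb (π i) = x (π i) := by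
    intro i hi
    have := e.extendSubtype_not_mem i hi
    simpa using this
  -- coordinatewise value permutations
  set g : Fin d → Equiv.Perm (Fin (K + 1)) := fun i =>
    if (i : ℕ) < r then
      (Equiv.swap (x (π i)) 0).trans
        (Equiv.swap ((Equiv.swap (x (π i)) 0) (xb (π i))) 1)
    else Equiv.swap (x (π i)) 0 with hg
  have hg_x : ∀ i, g i (x (π i)) = 0 := by
    intro i
    by_cases hi : (i : ℕ) < r
    · simp only [hg, if_pos hi, Equiv.trans_apply, Equiv.swap_apply_left]
      apply Equiv.swap_apply_of_ne_of_ne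
      · intro h
        have : xb (π i) = x (π i) := by
          have := (Equiv.swap (x (π i)) 0).injective
            (h.symm.trans (Equiv.swap_apply_left (x (π i)) 0).symm)
          exact this
        exact hπ_mem i hi this
      · exact hone.symm
    · simp only [hg, if_neg hi, Equiv.swap_apply_left]
  have hg_xb : ∀ i, g i (xb (π i)) = xbC i := by
    intro i
    by_cases hi : (i : ℕ) < r
    · simp only [hg, hxbC, if_pos hi, Equiv.trans_apply, Equiv.swap_apply_left]
    · simp only [hxbC, if_neg hi]
      rw [hπ_notMem i hi]
      simpa only [hg, if_neg hi] using (Equiv.swap_apply_left (x (π i)) 0)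
  -- forward and backward maps on configurations
  set F : (Fin d → Fin (K + 1)) → (Fin d → Fin (K + 1)) :=
    fun z i => g i (z (π i)) with hF
  set Fi : (Fin d → Fin (K + 1)) → (Fin d → Fin (K + 1)) :=
    fun w j => (g (π.symm j)).symm (w (π.symm j)) with hFi
  have hFFi : ∀ w, F (Fi w) = w := by
    intro w; funext i
    simp [hF, hFi]
  have hFiF : ∀ z, Fi (F z) = z := by
    intro z; funext j
    simp [hF, hFi]
  -- Hamming distances are preserved
  have ham_x : ∀ z, ham x z = ham (fun _ => 0) (F z) := by
    intro z
    unfold ham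
    rw [← card_filter_perm π (fun j => z j ≠ x j)]
    apply Finset.card_bij (fun a _ => a) <;> try (intro a _ b _ h; exact h)
    · intro a ha
      simp only [mem_filter, mem_univ, true_and] at ha ⊢
      rw [hF]
      rw [← hg_x a]
      exact fun h => ha ((g a).injective h)
    · intro b hb
      refine ⟨b, ?_, rfl⟩
      simp only [mem_filter, mem_univ, true_and, hF] at hb ⊢
      rw [← hg_x b] at hb
      exact fun h => hb (congrArg (g b) h)
  have ham_xb : ∀ z, ham xb z = ham xbC (F z) := by
    intro z
    unfold ham
    rw [← card_filter_perm π (fun j => z j ≠ xb j)]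
    apply Finset.card_bij (fun a _ => a) <;> try (intro a _ b _ h; exact h)
    · intro a ha
      simp only [mem_filter, mem_univ, true_and] at ha ⊢
      rw [hF, ← hg_xb a]
      exact fun h => ha ((g a).injective h)
    · intro b hb
      refine ⟨b, ?_, rfl⟩
      simp only [mem_filter, mem_univ, true_and, hF] at hb ⊢
      rw [← hg_xb b] at hb
      exact fun h => hb (congrArg (g b) h)
  -- the key cardinality identity
  have key : (Finset.univ.filter fun z : Fin d → Fin (K + 1) =>
        ham x z = u ∧ ham xb z = v).card
      = (Finset.univ.filter fun z : Fin d → Fin (K + 1) =>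
          ham (fun _ => 0) z = u ∧ ham xbC z = v).card := by
    apply Finset.card_bij' (fun z _ => F z) (fun w _ => Fi w)
    · intro z hz
      simp only [mem_filter, mem_univ, true_and] at hz ⊢
      exact ⟨(ham_x z).symm.trans hz.1, (ham_xb z).symm.trans hz.2⟩
    · intro w hw
      simp only [mem_filter, mem_univ, true_and] at hw ⊢
      constructor
      · rw [ham_x (Fi w), hFFi]; exact hw.1
      · rw [ham_xb (Fi w), hFFi]; exact hw.2
    · intro z _; exact hFiF z
    · intro w _; exact hFFi w
  refine ⟨key, ?_, ?_⟩
  · rw [sum_discreteProb α ((1 - α) / K) x _ u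
      (fun z hz => (Finset.mem_filter.mp hz).2.1),
      sum_discreteProb α ((1 - α) / K) (fun _ => 0) _ u
      (fun z hz => (Finset.mem_filter.mp hz).2.1), key]
  · rw [sum_discreteProb α ((1 - α) / K) xb _ v
      (fun z hz => (Finset.mem_filter.mp hz).2.2),
      sum_discreteProb α ((1 - α) / K) xbC _ v
      (fun z hz => (Finset.mem_filter.mp hz).2.2), key]
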